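/- For each natural number d, consider the group G = (Z/4Z)^d × Z and the sets A = (Z/4Z)^d × {0} ∪ {0}^d × {1,...,2^d} and B = {0,1}^d × {0} (where {0,1} ⊆ Z/4Z). Then |A| = 4^d + 2^d, |2·A| = 2·2^d, |A + B| = 2·4^d, and |2·A + 2·B| = 4^d + 2^d. Consequently |A+B|/|A| ≤ 2 while |2·A + 2·B|/|2·A| ≥ 2^{d−1}. -/
import Mathlib
open Pointwise

section helpers
variable {α β : Type*}

lemma myCardProd (s : Set α) (t : Set β) :
    Nat.card ↥(s ×ˢ t) = Nat.card s * Nat.card t := by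
  rw [Nat.card_congr (Equiv.Set.prod s t), Nat.card_prod]

lemma myProdAdd [AddMonoid α] [AddMonoid β] (s u : Set α) (t v : Set β) :
    (s ×ˢ t) + (u ×ˢ v) = (s + u) ×ˢ (t + v) := by
  ext ⟨a, b⟩
  simp only [Set.mem_add, Set.mem_prod, Prod.exists, Prod.mk_add_mk, Prod.mk.injEq]
  constructor
  · rintro ⟨x, y, ⟨hx, hy⟩, z, w, ⟨hz, hw⟩, h1, h2⟩
    exact ⟨⟨x, hx, z, hz, h1⟩, ⟨y, hy, w, hw, h2⟩⟩
  · rintro ⟨⟨x, hx, z, hz, h1⟩, ⟨y, hy, w, hw, h2⟩⟩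
    exact ⟨x, y, ⟨hx, hy⟩, z, w, ⟨hz, hw⟩, h1, h2⟩

lemma myImgProd [AddMonoid α] [AddMonoid β] (n : ℕ) (s : Set α) (t : Set β) :
    (fun p : α × β => n • p) '' (s ×ˢ t) = ((n • ·) '' s) ×ˢ ((n • ·) '' t) := by
  ext ⟨a, b⟩
  simp only [Set.mem_image, Set.mem_prod, Prod.exists, Prod.smul_mk, Prod.mk.injEq,
    Prod.smul_def]
  constructor
  · rintro ⟨x, y, ⟨hx, hy⟩, h1, h2⟩
    exact ⟨⟨x, hx, h1⟩, ⟨y, hy, h2⟩⟩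
  · rintro ⟨⟨x, hx, h1⟩, ⟨y, hy, h2⟩⟩
    exact ⟨x, y, ⟨hx, hy⟩, h1, h2⟩

lemma myCardUnion (s t : Set α) (h : Disjoint s t) (hs : s.Finite) (ht : t.Finite) :
    Nat.card ↥(s ∪ t) = Nat.card s + Nat.card t := by
  rw [Nat.card_coe_set_eq, Nat.card_coe_set_eq, Nat.card_coe_set_eq,
    Set.ncard_union_eq h hs ht]

end helpers

theorem stmt_17 (d : ℕ)
    (A B : Set ((Fin d → ZMod 4) × ℤ))
    (hA : A = (Set.univ : Set (Fin d → ZMod 4)) ×ˢ {(0 : ℤ)} ∪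
        {(0 : Fin d → ZMod 4)} ×ˢ (Set.Icc (1 : ℤ) (2 ^ d)))
    (hB : B = {x : Fin d → ZMod 4 | ∀ i, x i = 0 ∨ x i = 1} ×ˢ {(0 : ℤ)}) :
    Nat.card A = 4 ^ d + 2 ^ d ∧
    Nat.card ((fun p : (Fin d → ZMod 4) × ℤ => (2 : ℕ) • p) '' A) = 2 * 2 ^ d ∧
    Nat.card ↥(A + B) = 2 * 4 ^ d ∧
    Nat.card ↥((fun p : (Fin d → ZMod 4) × ℤ => (2 : ℕ) • p) '' A +
        (fun p : (Fin d → ZMod 4) × ℤ => (2 : ℕ) • p) '' B) = 4 ^ d + 2 ^ d ∧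
    (Nat.card ↥(A + B) : ℝ) / (Nat.card A : ℝ) ≤ 2 ∧
    (2 : ℝ) ^ ((d : ℤ) - 1) ≤
      (Nat.card ↥((fun p : (Fin d → ZMod 4) × ℤ => (2 : ℕ) • p) '' A +
          (fun p : (Fin d → ZMod 4) × ℤ => (2 : ℕ) • p) '' B) : ℝ) /
        (Nat.card ((fun p : (Fin d → ZMod 4) × ℤ => (2 : ℕ) • p) '' A) : ℝ) := by
  have cardI : Nat.card (Set.Icc (1:ℤ) (2^d)) = 2 ^ d := by
    rw [Nat.card_coe_set_eq, Set.ncard_eq_toFinset_card', Set.toFinset_Icc, Int.card_Icc]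
    have : (2:ℤ)^d + 1 - 1 = ((2^d : ℕ) : ℤ) := by push_cast; ring
    rw [this, Int.toNat_natCast]
  set S : Set (Fin d → ZMod 4) := {x | ∀ i, x i = 0 ∨ x i = 1} with hS
  set D : Set (Fin d → ZMod 4) := Set.univ.pi (fun _ => ({0, 2} : Set (ZMod 4))) with hD
  set I : Set ℤ := Set.Icc 1 (2 ^ d) with hI
  set E : Set ℤ := ((2 : ℕ) • ·) '' I with hE
  -- basic cards
  have cardUniv : Nat.card (Set.univ : Set (Fin d → ZMod 4)) = 4 ^ d := by
    rw [Nat.card_coe_set_eq, Set.ncard_univ, Nat.card_eq_fintype_card, Fintype.card_pi]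
    simp [ZMod.card]
  have cardS : Nat.card S = 2 ^ d := by
    have h : S = Set.univ.pi (fun _ => ({0, 1} : Set (ZMod 4))) := by
      ext x; simp [hS, Set.mem_pi]
    have h2 : Nat.card ({0, 1} : Set (ZMod 4)) = 2 := by
      rw [Nat.card_coe_set_eq, Set.ncard_pair (by decide)]
    rw [h, Nat.card_congr (Equiv.Set.univPi _), Nat.card_pi]
    simp only [h2, Finset.prod_const, Finset.card_univ, Fintype.card_fin]
  have cardD : Nat.card D = 2 ^ d := by
    have h2 : Nat.card ({0, 2} : Set (ZMod 4)) = 2 := by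
      rw [Nat.card_coe_set_eq, Set.ncard_pair (by decide)]
    rw [hD, Nat.card_congr (Equiv.Set.univPi _), Nat.card_pi]
    simp only [h2, Finset.prod_const, Finset.card_univ, Fintype.card_fin]
  have cardE : Nat.card E = 2 ^ d := by
    rw [hE, Nat.card_coe_set_eq,
      Set.ncard_image_of_injective _ (fun a b hab => by simpa using hab),
      ← Nat.card_coe_set_eq, cardI]
  have card0 : ∀ (γ : Type) (c : γ), Nat.card ({c} : Set γ) = 1 := fun γ c => by
    simp [Nat.card_coe_set_eq]
  -- image facts
  have imgUniv : ((2 : ℕ) • ·) '' (Set.univ : Set (Fin d → ZMod 4)) = D := by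
    ext x
    simp only [Set.image_univ, Set.mem_range, hD, Set.mem_pi, Set.mem_univ, true_implies]
    constructor
    · rintro ⟨y, rfl⟩ i
      have : ∀ z : ZMod 4, (2:ℕ) • z ∈ ({0, 2} : Set (ZMod 4)) := by decide
      exact this (y i)
    · intro hx
      have : ∀ z ∈ ({0, 2} : Set (ZMod 4)), ∃ w : ZMod 4, (2:ℕ) • w = z := by decide
      choose f hf using this
      exact ⟨fun i => f (x i) (hx i), funext fun i => hf _ (hx i)⟩
  have imgS : ((2 : ℕ) • ·) '' S = D := by
    ext x
    simp only [Set.mem_image, hS, Set.mem_setOf_eq, hD, Set.mem_pi, Set.mem_univ, true_implies]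
    constructor
    · rintro ⟨y, hy, rfl⟩ i
      have : ∀ z : ZMod 4, (z = 0 ∨ z = 1) → (2:ℕ) • z ∈ ({0, 2} : Set (ZMod 4)) := by decide
      exact this (y i) (hy i)
    · intro hx
      have : ∀ z ∈ ({0, 2} : Set (ZMod 4)), ∃ w : ZMod 4, (w = 0 ∨ w = 1) ∧ (2:ℕ) • w = z := by
        decide
      choose f hf using this
      exact ⟨fun i => f (x i) (hx i), fun i => (hf _ (hx i)).1, funext fun i => (hf _ (hx i)).2⟩
  have img0 : ∀ {γ : Type} [AddMonoid γ], ((2 : ℕ) • ·) '' ({0} : Set γ) = {0} := by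
    intro γ _; rw [Set.image_singleton, smul_zero]
  -- sum facts
  have DD : D + D = D := by
    ext x
    simp only [Set.mem_add, hD, Set.mem_pi, Set.mem_univ, true_implies]
    constructor
    · rintro ⟨y, hy, z, hz, rfl⟩ i
      have : ∀ a b : ZMod 4, a ∈ ({0,2} : Set (ZMod 4)) → b ∈ ({0,2} : Set (ZMod 4)) →
          a + b ∈ ({0,2} : Set (ZMod 4)) := by decide
      exact this _ _ (hy i) (hz i)
    · intro hx
      exact ⟨x, hx, 0, fun i => by simp, by simp⟩
  have zeroMemS : (0 : Fin d → ZMod 4) ∈ S := fun i => Or.inl rfl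
  have zeroMemD : (0 : Fin d → ZMod 4) ∈ D := fun i _ => Or.inl rfl
  have zeroAdd' : ∀ {γ : Type} [AddMonoid γ] (s : Set γ), ({0} : Set γ) + s = s := by
    intro γ _ s; rw [Set.singleton_add]; simp
  have addZero' : ∀ {γ : Type} [AddMonoid γ] (s : Set γ), s + ({0} : Set γ) = s := by
    intro γ _ s; rw [Set.add_singleton]; simp
  -- finiteness
  have finUniv : (Set.univ : Set (Fin d → ZMod 4)).Finite := Set.toFinite _
  have finS : S.Finite := Set.toFinite _
  have finD : D.Finite := Set.toFinite _
  have finI : I.Finite := Set.finite_Icc _ _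
  have finE : E.Finite := finI.image _
  -- 0 ∉ E
  have zeroNotE : (0 : ℤ) ∉ E := by
    rintro ⟨n, hn, h⟩
    have h1 : (1:ℤ) ≤ n := hn.1
    simp only [nsmul_eq_mul] at h
    push_cast at h
    omega
  -- zero not in I
  have zeroNotI : (0 : ℤ) ∉ I := by simp [hI]
  -- rewrite the sets
  have h2A : (fun p : (Fin d → ZMod 4) × ℤ => (2 : ℕ) • p) '' A = D ×ˢ {0} ∪ {0} ×ˢ E := by
    rw [hA, Set.image_union, myImgProd, myImgProd, imgUniv, img0, img0]
  have h2B : (fun p : (Fin d → ZMod 4) × ℤ => (2 : ℕ) • p) '' B = D ×ˢ {0} := by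
    rw [hB, myImgProd, imgS, img0]
  have hAB : A + B = (Set.univ : Set (Fin d → ZMod 4)) ×ˢ {(0:ℤ)} ∪ S ×ˢ I := by
    rw [hA, hB, Set.union_add, myProdAdd, myProdAdd,
      Set.univ_add_of_zero_mem zeroMemS, addZero', zeroAdd', addZero']
  have h2AB : (fun p : (Fin d → ZMod 4) × ℤ => (2 : ℕ) • p) '' A +
      (fun p : (Fin d → ZMod 4) × ℤ => (2 : ℕ) • p) '' B = D ×ˢ {0} ∪ D ×ˢ E := by
    rw [h2A, h2B, Set.union_add, myProdAdd, myProdAdd, DD, zeroAdd' D,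
      addZero' E, addZero' ({0} : Set ℤ)]
  -- disjointness helpers
  have disjSnd : ∀ (s u : Set (Fin d → ZMod 4)) (t v : Set ℤ), Disjoint t v →
      Disjoint (s ×ˢ t) (u ×ˢ v) := by
    intro s u t v h
    rw [Set.disjoint_left]
    rintro ⟨x, n⟩ ⟨-, h1⟩ ⟨-, h2⟩
    exact (Set.disjoint_left.mp h) h1 h2
  have disj0I : Disjoint ({0} : Set ℤ) (Set.Icc (1:ℤ) (2^d)) :=
    Set.disjoint_singleton_left.mpr zeroNotI
  have disj0E : Disjoint ({0} : Set ℤ) E := Set.disjoint_singleton_left.mpr zeroNotE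
  -- the four cardinalities
  have c1 : Nat.card A = 4 ^ d + 2 ^ d := by
    rw [hA, myCardUnion _ _ (disjSnd _ _ _ _ disj0I)
        (finUniv.prod (Set.finite_singleton _)) ((Set.finite_singleton _).prod finI),
      myCardProd, myCardProd, cardUniv, cardI, card0, card0]
    ring
  have c2 : Nat.card ((fun p : (Fin d → ZMod 4) × ℤ => (2 : ℕ) • p) '' A) = 2 * 2 ^ d := by
    rw [h2A, myCardUnion _ _ (disjSnd _ _ _ _ disj0E)
        (finD.prod (Set.finite_singleton _)) ((Set.finite_singleton _).prod finE),
      myCardProd, myCardProd, cardD, cardE, card0, card0]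
    ring
  have c3 : Nat.card ↥(A + B) = 2 * 4 ^ d := by
    rw [hAB, myCardUnion _ _ (disjSnd _ _ _ _ disj0I)
        (finUniv.prod (Set.finite_singleton _)) (finS.prod finI),
      myCardProd, myCardProd, cardUniv, cardS, cardI, card0]
    have : 2 ^ d * 2 ^ d = 4 ^ d := by rw [← mul_pow]; norm_num
    omega
  have c4 : Nat.card ↥((fun p : (Fin d → ZMod 4) × ℤ => (2 : ℕ) • p) '' A +
      (fun p : (Fin d → ZMod 4) × ℤ => (2 : ℕ) • p) '' B) = 4 ^ d + 2 ^ d := by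
    rw [h2AB, myCardUnion _ _ (disjSnd _ _ _ _ disj0E)
        (finD.prod (Set.finite_singleton _)) (finD.prod finE),
      myCardProd, myCardProd, cardD, cardE, card0]
    have : 2 ^ d * 2 ^ d = 4 ^ d := by rw [← mul_pow]; norm_num
    omega
  have two_pos : (0:ℝ) < 2 ^ d := by positivity
  have four_eq : (4:ℝ) ^ d = 2 ^ d * 2 ^ d := by rw [← mul_pow]; norm_num
  refine ⟨c1, c2, c3, c4, ?_, ?_⟩
  · rw [c3, c1]
    rw [div_le_iff₀ (by positivity)]
    push_cast
    nlinarith [pow_pos (show (0:ℝ) < 2 by norm_num) d, pow_pos (show (0:ℝ) < 4 by norm_num) d]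
  · rw [c4, c2]
    rw [zpow_sub₀ (by norm_num : (2:ℝ) ≠ 0), zpow_natCast, zpow_one]
    rw [div_le_div_iff₀ (by norm_num) (by positivity)]
    push_cast
    nlinarith [pow_pos (show (0:ℝ) < 2 by norm_num) d]
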